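/- Let t denote the generator of the ring ℤ[t, t⁻¹] of Laurent polynomials over ℤ. Fix integers n ≥ 2, r ≥ 1, s ≥ 0, and set P = (t - t⁻¹)^(n-2) * ((2r-1) + r*t² - r*t⁻²)^s. Then: (i) the coefficient of t^(n-2+2s) in P equals r^s; (ii) the coefficient of t^d in P is 0 for every d > n-2+2s; (iii) the coefficient of t^(-(n-2+2s)) in P equals (-1)^(n+s) * r^s; and (iv) the coefficient of t^d in P is 0 for every d < -(n-2+2s). -/

import Mathlib

open LaurentPolynomial Polynomial

lemma tl_coe (f : ℤ[X]) (k : ℕ) : (Polynomial.toLaurent f).coeff (k : ℤ) = f.coeff k := by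
  rw [LaurentPolynomial.coeff_toLaurent]
  exact Finsupp.mapDomain_apply Nat.castEmbedding.injective _ k

lemma tl_neg (f : ℤ[X]) {k : ℤ} (hk : k < 0) : (Polynomial.toLaurent f).coeff k = 0 := by
  rw [LaurentPolynomial.coeff_toLaurent]
  refine Finsupp.mapDomain_of_notMem_range _ _ ?_
  rintro ⟨a, rfl⟩; exact absurd hk (not_lt.mpr (Nat.cast_nonneg a))

lemma coeff_mul_T (f : LaurentPolynomial ℤ) (m d : ℤ) :
    (f * (T m : LaurentPolynomial ℤ)).coeff d = f.coeff (d - m) := by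
  have h : (T m : LaurentPolynomial ℤ) = AddMonoidAlgebra.single m 1 := rfl
  rw [h]
  have := AddMonoidAlgebra.coeff_mul_single_apply f (1 : ℤ) m d
  simpa [sub_eq_add_neg] using this

/-- Fix `n ≥ 2`, `r ≥ 1`, `s ≥ 0` and let
`P = (t - t⁻¹)^(n-2) * ((2r-1) + r t² - r t⁻²)^s ∈ ℤ[t, t⁻¹]`
(the Seiberg–Witten polynomial of the knot-surgered manifold `Y(n)_{r,s}`). Then the
coefficient of `t^(n-2+2s)` is `r^s`, all coefficients above it vanish, the coefficient of
`t^(-(n-2+2s))` is `(-1)^(n+s) * r^s`, and all coefficients below it vanish. -/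
theorem SW_Ynrs_top_coefficients (n : ℕ) (hn : 2 ≤ n) (r : ℤ) (hr : 1 ≤ r) (s : ℕ)
    (P : LaurentPolynomial ℤ)
    (hP : P = (T 1 - T (-1)) ^ (n - 2) *
      (((2 * r - 1 : ℤ) : LaurentPolynomial ℤ) +
        (r : ℤ) • T 2 - (r : ℤ) • T (-2)) ^ s) :
    P.coeff ((n : ℤ) - 2 + 2 * s) = r ^ s ∧
    (∀ d : ℤ, (n : ℤ) - 2 + 2 * s < d → P.coeff d = 0) ∧
    P.coeff (-((n : ℤ) - 2 + 2 * s)) = (-1) ^ (n + s) * r ^ s ∧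
    (∀ d : ℤ, d < -((n : ℤ) - 2 + 2 * s) → P.coeff d = 0) := by
  have hr0 : r ≠ 0 := by omega
  set p : ℤ[X] := X ^ 2 - 1 with hp_def
  set q : ℤ[X] := Polynomial.C r * X ^ 4 + Polynomial.C (2 * r - 1) * X ^ 2 - Polynomial.C r with hq_def
  set Q : ℤ[X] := p ^ (n - 2) * q ^ s with hQ_def
  set m : ℕ := (n - 2) + 2 * s with hm_def
  -- factorizations
  have hfac1 : (T 1 - T (-1) : LaurentPolynomial ℤ) = Polynomial.toLaurent p * T (-1) := by
    rw [hp_def, map_sub, Polynomial.toLaurent_X_pow, map_one, sub_mul, one_mul, ← T_add]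
    norm_num
  have hfac2 : (((2 * r - 1 : ℤ) : LaurentPolynomial ℤ) +
      (r : ℤ) • T 2 - (r : ℤ) • T (-2)) = Polynomial.toLaurent q * T (-2) := by
    rw [hq_def, map_sub, map_add, Polynomial.toLaurent_C_mul_X_pow,
      Polynomial.toLaurent_C_mul_X_pow, Polynomial.toLaurent_C,
      sub_mul, add_mul, mul_T_assoc, mul_T_assoc, ← (eq_intCast (C : ℤ →+* LaurentPolynomial ℤ))]
    norm_num
    ring
  have hPQ : P = Polynomial.toLaurent Q * T (-(m : ℤ)) := by
    rw [hP, hfac1, hfac2, mul_pow, mul_pow, T_pow, T_pow, hQ_def, map_mul, map_pow, map_pow]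
    rw [show (Polynomial.toLaurent p) ^ (n-2) * T (↑(n-2) * -1) *
        ((Polynomial.toLaurent q) ^ s * T (↑s * -2)) =
        (Polynomial.toLaurent p) ^ (n-2) * (Polynomial.toLaurent q) ^ s *
        (T (↑(n-2) * -1) * T (↑s * -2)) by ring, ← T_add]
    congr 1
    rw [hm_def]
    simp only [mul_neg, mul_one]
    push_cast [Nat.cast_sub hn]
    ring
  have hm : ((n : ℤ) - 2 + 2 * s) = (m : ℤ) := by rw [hm_def]; push_cast [Nat.cast_sub hn]; ring
  -- polynomial degree facts
  have hpm : p.Monic := by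
    have := Polynomial.monic_X_pow_sub_C (1 : ℤ) (n := 2) (by norm_num)
    simpa [hp_def] using this
  have hpd : p.natDegree = 2 := by rw [hp_def]; compute_degree!
  have hqd : q.natDegree = 4 := by rw [hq_def]; compute_degree!
  have hqc : q.leadingCoeff = r := by
    rw [Polynomial.leadingCoeff, hqd, hq_def]
    simp only [Polynomial.coeff_sub, Polynomial.coeff_add, Polynomial.coeff_C_mul,
      Polynomial.coeff_X_pow, Polynomial.coeff_C]
    norm_num
  have hq0 : q ≠ 0 := fun h => hr0 (by rw [← hqc, h]; simp)
  have hQd : Q.natDegree = 2 * m := by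
    rw [hQ_def, Polynomial.natDegree_mul (pow_ne_zero _ hpm.ne_zero) (pow_ne_zero _ hq0),
      Polynomial.natDegree_pow, Polynomial.natDegree_pow, hpd, hqd, hm_def]
    ring
  have hQtop : Q.coeff (2 * m) = r ^ s := by
    rw [← hQd, ← Polynomial.leadingCoeff, hQ_def, Polynomial.leadingCoeff_mul,
      Polynomial.leadingCoeff_pow, Polynomial.leadingCoeff_pow, hpm.leadingCoeff, hqc, one_pow,
      one_mul]
  have hQ0 : Q.coeff 0 = (-1) ^ (n + s) * r ^ s := by
    rw [Polynomial.coeff_zero_eq_eval_zero, hQ_def, hp_def, hq_def]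
    simp only [Polynomial.eval_mul, Polynomial.eval_pow, Polynomial.eval_sub,
      Polynomial.eval_add, Polynomial.eval_X, Polynomial.eval_one, Polynomial.eval_C]
    norm_num
    have h1 : ((-1:ℤ)) ^ (n - 2) = (-1 : ℤ) ^ n := by
      have : (-1 : ℤ) ^ (n - 2) * (-1) ^ 2 = (-1 : ℤ) ^ n := by
        rw [← pow_add]; congr 1; omega
      simpa using this
    rw [h1, show (-r : ℤ) ^ s = (-1) ^ s * r ^ s by rw [neg_pow], pow_add]
    ring
  -- conclude
  refine ⟨?_, ?_, ?_, ?_⟩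
  · rw [hPQ, hm, coeff_mul_T, sub_neg_eq_add, show ((m:ℤ) + m) = ((2 * m : ℕ) : ℤ) by push_cast; ring,
      tl_coe, hQtop]
  · intro d hd
    rw [hm] at hd
    rw [hPQ, coeff_mul_T, sub_neg_eq_add]
    have h0 : (0:ℤ) ≤ d + m := by omega
    rw [show (d + (m:ℤ)) = ((d + m).toNat : ℤ) by omega, tl_coe]
    apply Polynomial.coeff_eq_zero_of_natDegree_lt
    rw [hQd]; omega
  · rw [hPQ, hm, coeff_mul_T, sub_neg_eq_add, show (-(m:ℤ) + m) = ((0 : ℕ) : ℤ) by omega,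
      tl_coe, hQ0]
  · intro d hd
    rw [hm] at hd
    rw [hPQ, coeff_mul_T, sub_neg_eq_add]
    exact tl_neg _ (by omega)
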